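/- Let G : ℝ × ℝ → ℝ be differentiable in its second argument, let F be the deformation gradient of the anti-plane shear deformation x(t,X) = (X₁, X₂, X₃ + G(t,R)), R = √(X₁²+X₂²), and let C = FᵀF. Let A₁, A₂ be the helical fiber direction fields with pitch angle β. Then at every point with R > 0, the invariants take the values I₁ = I₂ = 3 + G_R², I₃ = det C = 1, I₄ = I₆ = 1, I₅ = I₇ = 1 + G_R² sin²β, and I₈ = cos²(2β), where G_R = ∂G/∂R(t,R). -/

import Mathlib

noncomputable section

open Real Matrix

/-- Cylindrical radius `R = √(X₁² + X₂²)` of a material point `X`. -/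
def rad (X : Fin 3 → ℝ) : ℝ := Real.sqrt (X 0 ^ 2 + X 1 ^ 2)

/-- The anti-plane shear deformation `x(t,X) = (X₁, X₂, X₃ + G(t,R))`. -/
def defm (G : ℝ → ℝ → ℝ) (t : ℝ) (X : Fin 3 → ℝ) : Fin 3 → ℝ :=
  ![X 0, X 1, X 2 + G t (rad X)]

/-- Partial derivative of a scalar field on `ℝ³` with respect to the `j`-th coordinate. -/
def pd (f : (Fin 3 → ℝ) → ℝ) (j : Fin 3) (X : Fin 3 → ℝ) : ℝ :=
  deriv (fun s => f (Function.update X j s)) (X j)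

/-- Deformation gradient `F_{ij} = ∂x_i/∂X_j` of the anti-plane shear deformation. -/
def defGrad (G : ℝ → ℝ → ℝ) (t : ℝ) (X : Fin 3 → ℝ) : Matrix (Fin 3) (Fin 3) ℝ :=
  Matrix.of fun i j => pd (fun Y => defm G t Y i) j X

/-- Right Cauchy–Green tensor `C = FᵀF`. -/
def CG (G : ℝ → ℝ → ℝ) (t : ℝ) (X : Fin 3 → ℝ) : Matrix (Fin 3) (Fin 3) ℝ :=
  (defGrad G t X)ᵀ * defGrad G t X

/-- Symmetrization `(M + Mᵀ)/2` of a matrix. -/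
def symM (M : Matrix (Fin 3) (Fin 3) ℝ) : Matrix (Fin 3) (Fin 3) ℝ :=
  (1 / 2 : ℝ) • (M + Mᵀ)

/-- First helical fiber field `A₁ = (−cosβ sinΦ, cosβ cosΦ, sinβ)`. -/
def fib1 (β : ℝ) (X : Fin 3 → ℝ) : Fin 3 → ℝ :=
  ![-(Real.cos β) * (X 1 / rad X), Real.cos β * (X 0 / rad X), Real.sin β]

/-- Second helical fiber field `A₂ = (−cosβ sinΦ, cosβ cosΦ, −sinβ)`. -/
def fib2 (β : ℝ) (X : Fin 3 → ℝ) : Fin 3 → ℝ :=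
  ![-(Real.cos β) * (X 1 / rad X), Real.cos β * (X 0 / rad X), -(Real.sin β)]

/-- Invariant `I₁ = tr C`. -/
def inv1 (M : Matrix (Fin 3) (Fin 3) ℝ) : ℝ := M.trace

/-- Invariant `I₂ = ½((tr C)² − tr(C²))`. -/
def inv2 (M : Matrix (Fin 3) (Fin 3) ℝ) : ℝ := (M.trace ^ 2 - (M * M).trace) / 2

/-- Invariant `I₄ = AᵀCA` (and `I₆` for the second fiber). -/
def inv4 (A : Fin 3 → ℝ) (M : Matrix (Fin 3) (Fin 3) ℝ) : ℝ := A ⬝ᵥ (M *ᵥ A)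

/-- Invariant `I₅ = AᵀC²A` (and `I₇` for the second fiber). -/
def inv5 (A : Fin 3 → ℝ) (M : Matrix (Fin 3) (Fin 3) ℝ) : ℝ := A ⬝ᵥ ((M * M) *ᵥ A)

/-- Invariant `I₈ = (A₁ᵀA₂)(A₁ᵀCA₂)`. -/
def inv8 (A₁ A₂ : Fin 3 → ℝ) (M : Matrix (Fin 3) (Fin 3) ℝ) : ℝ :=
  (A₁ ⬝ᵥ A₂) * (A₁ ⬝ᵥ (M *ᵥ A₂))

/-- Matrix of partial derivatives of a scalar function of a matrix with respect to the
matrix entries, evaluated at `C`. -/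
def matPD (f : Matrix (Fin 3) (Fin 3) ℝ → ℝ) (C : Matrix (Fin 3) (Fin 3) ℝ) :
    Matrix (Fin 3) (Fin 3) ℝ :=
  Matrix.of fun i j => deriv (fun s : ℝ => f (C + s • Matrix.single i j 1)) 0

/-- Partial derivative in the first (time) variable. -/
def dt (G : ℝ → ℝ → ℝ) : ℝ → ℝ → ℝ := fun t R => deriv (fun τ => G τ R) t

/-- Partial derivative in the second (radial) variable. -/
def dR (G : ℝ → ℝ → ℝ) : ℝ → ℝ → ℝ := fun t R => deriv (fun r => G t r) R


private lemma hasDerivAt_aux (G : ℝ → ℝ → ℝ) (hG : ∀ t, Differentiable ℝ (G t)) (t : ℝ)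
    (x y : ℝ) (hR : 0 < x ^ 2 + y ^ 2) :
    HasDerivAt (fun s => G t (Real.sqrt (s ^ 2 + y ^ 2)))
      (dR G t (Real.sqrt (x ^ 2 + y ^ 2)) * (x / Real.sqrt (x ^ 2 + y ^ 2))) x := by
  have h1 : HasDerivAt (fun s : ℝ => s ^ 2 + y ^ 2) (2 * x) x := by
    simpa using (hasDerivAt_pow 2 x).add_const (y ^ 2)
  have h2 := (Real.hasDerivAt_sqrt (ne_of_gt hR)).comp x h1
  have h3 := ((hG t).differentiableAt.hasDerivAt).comp x h2
  refine HasDerivAt.congr_deriv (f := fun s => G t (Real.sqrt (s ^ 2 + y ^ 2))) h3 ?_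
  have hs : Real.sqrt (x ^ 2 + y ^ 2) ≠ 0 := ne_of_gt (Real.sqrt_pos.mpr hR)
  field_simp [dR]
  simp only [dR, Function.comp_apply]
  ring_nf

private lemma defGrad_eq (G : ℝ → ℝ → ℝ) (hG : ∀ t, Differentiable ℝ (G t)) (t : ℝ)
    (X : Fin 3 → ℝ) (hR : rad X > 0) :
    defGrad G t X =
      !![1, 0, 0; 0, 1, 0;
         dR G t (rad X) * (X 0 / rad X), dR G t (rad X) * (X 1 / rad X), 1] := by
  have hpos : 0 < X 0 ^ 2 + X 1 ^ 2 := Real.sqrt_pos.mp hR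
  have e00 : defGrad G t X 0 0 = 1 := by
    simp [defGrad, pd, defm, Function.update_apply]
  have e01 : defGrad G t X 0 1 = 0 := by
    simp [defGrad, pd, defm, Function.update_apply]
  have e02 : defGrad G t X 0 2 = 0 := by
    simp [defGrad, pd, defm, Function.update_apply]
  have e10 : defGrad G t X 1 0 = 0 := by
    simp [defGrad, pd, defm, Function.update_apply]
  have e11 : defGrad G t X 1 1 = 1 := by
    simp [defGrad, pd, defm, Function.update_apply]
  have e12 : defGrad G t X 1 2 = 0 := by
    simp [defGrad, pd, defm, Function.update_apply]
  have e20 : defGrad G t X 2 0 = dR G t (rad X) * (X 0 / rad X) := by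
    simp only [defGrad, Matrix.of_apply, pd, defm, Matrix.cons_val_two, Matrix.tail_cons,
      Matrix.head_cons]
    have he : (fun s => Function.update X 0 s 2 + G t (rad (Function.update X 0 s)))
        = fun s => X 2 + G t (Real.sqrt (s ^ 2 + X 1 ^ 2)) := by
      funext s; simp [rad, Function.update_apply]
    rw [he]
    have h := ((hasDerivAt_aux G hG t (X 0) (X 1) hpos).const_add (X 2)).deriv
    simpa [rad] using h
  have e21 : defGrad G t X 2 1 = dR G t (rad X) * (X 1 / rad X) := by
    simp only [defGrad, Matrix.of_apply, pd, defm, Matrix.cons_val_two, Matrix.tail_cons,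
      Matrix.head_cons]
    have he : (fun s => Function.update X 1 s 2 + G t (rad (Function.update X 1 s)))
        = fun s => X 2 + G t (Real.sqrt (s ^ 2 + X 0 ^ 2)) := by
      funext s; simp [rad, Function.update_apply, add_comm]
    rw [he]
    have hpos' : 0 < X 1 ^ 2 + X 0 ^ 2 := by linarith
    have h := ((hasDerivAt_aux G hG t (X 1) (X 0) hpos').const_add (X 2)).deriv
    have hcomm : Real.sqrt (X 1 ^ 2 + X 0 ^ 2) = rad X := by rw [rad, add_comm]
    rw [hcomm] at h
    simpa [rad] using h
  have e22 : defGrad G t X 2 2 = 1 := by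
    simp only [defGrad, Matrix.of_apply, pd, defm, Matrix.cons_val_two, Matrix.tail_cons,
      Matrix.head_cons]
    have he : (fun s => Function.update X 2 s 2 + G t (rad (Function.update X 2 s)))
        = fun s => s + G t (rad X) := by
      funext s; simp [rad, Function.update_apply]
    rw [he]
    simp
  ext i j
  fin_cases i <;> fin_cases j <;>
    simp only [Matrix.cons_val', Matrix.cons_val_zero, Matrix.cons_val_one, Matrix.head_cons,
      Matrix.empty_val', Matrix.cons_val_fin_one, Matrix.head_fin_const, Matrix.cons_val_two,
      Matrix.tail_cons] <;>
    first
      | exact e00 | exact e01 | exact e02 | exact e10 | exact e11 | exact e12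
      | exact e20 | exact e21 | exact e22

private lemma CG_eq (G : ℝ → ℝ → ℝ) (hG : ∀ t, Differentiable ℝ (G t)) (t : ℝ)
    (X : Fin 3 → ℝ) (hR : rad X > 0) :
    CG G t X =
      !![1 + (dR G t (rad X))^2*(X 0 / rad X)^2,
         (dR G t (rad X))^2*(X 0 / rad X)*(X 1 / rad X),
         dR G t (rad X)*(X 0 / rad X);
         (dR G t (rad X))^2*(X 0 / rad X)*(X 1 / rad X),
         1 + (dR G t (rad X))^2*(X 1 / rad X)^2,
         dR G t (rad X)*(X 1 / rad X);
         dR G t (rad X)*(X 0 / rad X), dR G t (rad X)*(X 1 / rad X), 1] := by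
  set g := dR G t (rad X); set a := X 0 / rad X; set b := X 1 / rad X
  have hT : (defGrad G t X)ᵀ = !![1, 0, g*a; 0, 1, g*b; 0, 0, 1] := by
    rw [defGrad_eq G hG t X hR]
    ext i j
    fin_cases i <;> fin_cases j <;>
      simp [Matrix.transpose_apply, Matrix.vecHead, Matrix.vecTail] <;> rfl
  rw [CG, hT, defGrad_eq G hG t X hR, Matrix.mul_fin_three]
  congr 1 <;> simp only [g, a, b] <;> ring

/-- For `G(t,R)` differentiable in its second argument, at every point with
`R > 0` the invariants of the anti-plane shear deformation with helical fibers of pitch `β`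
take the values `I₁ = I₂ = 3 + G_R²`, `I₃ = det C = 1`, `I₄ = I₆ = 1`,
`I₅ = I₇ = 1 + G_R² sin²β`, `I₈ = cos²(2β)`. -/
theorem antiPlaneShear_invariants
    (G : ℝ → ℝ → ℝ) (hG : ∀ t, Differentiable ℝ (G t)) (β : ℝ) :
    ∀ t : ℝ, ∀ X : Fin 3 → ℝ, rad X > 0 →
      inv1 (CG G t X) = 3 + (dR G t (rad X)) ^ 2 ∧
      inv2 (CG G t X) = 3 + (dR G t (rad X)) ^ 2 ∧
      (CG G t X).det = 1 ∧
      inv4 (fib1 β X) (CG G t X) = 1 ∧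
      inv4 (fib2 β X) (CG G t X) = 1 ∧
      inv5 (fib1 β X) (CG G t X) = 1 + (dR G t (rad X)) ^ 2 * Real.sin β ^ 2 ∧
      inv5 (fib2 β X) (CG G t X) = 1 + (dR G t (rad X)) ^ 2 * Real.sin β ^ 2 ∧
      inv8 (fib1 β X) (fib2 β X) (CG G t X) = Real.cos (2 * β) ^ 2 := by
  intro t X hR
  have hne : rad X ≠ 0 := ne_of_gt hR
  have h2 : rad X ^ 2 = X 0 ^ 2 + X 1 ^ 2 := Real.sq_sqrt (by positivity)
  have hab : (X 0 / rad X) ^ 2 + (X 1 / rad X) ^ 2 = 1 := by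
    field_simp
    linarith
  have hsc : Real.sin β ^ 2 + Real.cos β ^ 2 = 1 := Real.sin_sq_add_cos_sq β
  have h2β : Real.cos (2 * β) = Real.cos β ^ 2 - Real.sin β ^ 2 := by
    rw [Real.cos_two_mul]; linarith [hsc]
  rw [CG_eq G hG t X hR]
  set g := dR G t (rad X)
  set a := X 0 / rad X
  set b := X 1 / rad X
  set c := Real.cos β
  set s := Real.sin β
  refine ⟨?_, ?_, ?_, ?_, ?_, ?_, ?_, ?_⟩
  · simp only [inv1, Matrix.trace_fin_three_of]
    linear_combination g ^ 2 * hab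
  · simp only [inv2, Matrix.mul_fin_three, Matrix.trace_fin_three_of]
    linear_combination g ^ 2 * hab
  · simp [Matrix.det_fin_three]
    ring
  · simp [inv4, fib1, Matrix.mulVec, dotProduct, Fin.sum_univ_three]
    linear_combination c ^ 2 * hab + hsc
  · simp [inv4, fib2, Matrix.mulVec, dotProduct, Fin.sum_univ_three]
    linear_combination c ^ 2 * hab + hsc
  · simp [inv5, fib1, Matrix.mul_fin_three, Matrix.mulVec, dotProduct,
      Fin.sum_univ_three]
    linear_combination (c ^ 2 + g ^ 2 * s ^ 2) * hab + hsc
  · simp [inv5, fib2, Matrix.mul_fin_three, Matrix.mulVec, dotProduct,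
      Fin.sum_univ_three]
    linear_combination (c ^ 2 + g ^ 2 * s ^ 2) * hab + hsc
  · simp [inv8, fib1, fib2, Matrix.mulVec, dotProduct, Fin.sum_univ_three]
    linear_combination (c ^ 2 * (c ^ 2 * a ^ 2 + c ^ 2 * b ^ 2 + c ^ 2 - 2 * s ^ 2)) * hab
      - (c ^ 2 - s ^ 2 + Real.cos (2 * β)) * h2β
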